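/- arXiv:1911.12102 — 2 statements merged into one kernel-verified Lean document; each statement's English description precedes it below -/
import Mathlib

section
/- Let X be a normed space, r > 0, and ε > 0. Suppose E and F are bounded convex subsets of X that both contain the closed ball of radius r centered at the origin. If the Hausdorff distance between E and F is strictly less than ε, then F is contained in ((r+ε)/r)·E (the dilation of E by the scalar (r+ε)/r). -/
open scoped Pointwise

theorem hausdorff_close_implies_dilation
    {X : Type*} [NormedAddCommGroup X] [NormedSpace ℝ X]
    (r ε : ℝ) (hr : 0 < r) (hε : 0 < ε) (E F : Set X)
    (hEconv : Convex ℝ E) (hFconv : Convex ℝ F)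
    (hEb : Bornology.IsBounded E) (hFb : Bornology.IsBounded F)
    (hBE : Metric.closedBall (0 : X) r ⊆ E) (hBF : Metric.closedBall (0 : X) r ⊆ F)
    (hd : Metric.hausdorffDist E F < ε) :
    F ⊆ ((r + ε) / r) • E := by
  intro y hy
  have hE0 : (0 : X) ∈ E := hBE (Metric.mem_closedBall_self hr.le)
  have hF0 : (0 : X) ∈ F := hBF (Metric.mem_closedBall_self hr.le)
  have hfin : EMetric.hausdorffEdist E F ≠ ⊤ :=
    Metric.hausdorffEdist_ne_top_of_nonempty_of_bounded ⟨0, hE0⟩ ⟨0, hF0⟩ hEb hFb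
  obtain ⟨x, hxE, hxy⟩ :=
    Metric.exists_dist_lt_of_hausdorffDist_lt' hy hd hfin
  -- w := (r/ε) • (y - x) lies in the closed ball of radius r
  set w : X := (r / ε) • (y - x) with hw
  have hwball : w ∈ Metric.closedBall (0 : X) r := by
    rw [Metric.mem_closedBall, dist_zero_right, hw, norm_smul]
    have : ‖y - x‖ ≤ ε := by
      have := hxy
      rw [dist_comm] at this
      simpa [dist_eq_norm] using this.le
    have hre : |r / ε| = r / ε := abs_of_pos (by positivity)
    rw [Real.norm_eq_abs, hre]
    calc r / ε * ‖y - x‖ ≤ r / ε * ε := by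
          exact mul_le_mul_of_nonneg_left this (by positivity)
      _ = r := by field_simp
  have hwE : w ∈ E := hBE hwball
  have hrε : 0 < r + ε := by linarith
  -- convex combination
  have hz : (r / (r + ε)) • x + (ε / (r + ε)) • w ∈ E :=
    hEconv hxE hwE (by positivity) (by positivity) (by field_simp)
  refine ⟨(r / (r + ε)) • x + (ε / (r + ε)) • w, hz, ?_⟩
  show ((r + ε) / r) • ((r / (r + ε)) • x + (ε / (r + ε)) • w) = y
  rw [hw]
  have h1 : r ≠ 0 := hr.ne'
  have h2 : ε ≠ 0 := hε.ne'
  have h3 : r + ε ≠ 0 := hrε.ne'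
  match_scalars <;> (field_simp <;> ring)
end

section
/- Let ℓ₁, …, ℓ_d (d ≥ 1) be isometries with pairwise orthogonal ranges, sᵢ = ℓᵢ + ℓᵢ*, and let P be any orthogonal projection. Then ‖(d+1)·I − P + Σᵢ (ℓᵢ² + ℓᵢ*²)‖ ≤ (1 + √d)². -/
open ContinuousLinearMap

theorem norm_bound_lehner
    {H : Type*} [NormedAddCommGroup H] [InnerProductSpace ℂ H] [CompleteSpace H]
    (d : ℕ) (hd : 1 ≤ d)
    (ℓ : Fin d → H →L[ℂ] H)
    (hℓ : ∀ i j, (ContinuousLinearMap.adjoint (ℓ i)) ∘L (ℓ j) =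
      if i = j then (1 : H →L[ℂ] H) else 0)
    (P : H →L[ℂ] H) (hPproj : P ∘L P = P) (hPsa : IsSelfAdjoint P) :
    ‖((d : ℂ) + 1) • (1 : H →L[ℂ] H) - P +
        ∑ i, (ℓ i ∘L ℓ i +
          ContinuousLinearMap.adjoint (ℓ i) ∘L ContinuousLinearMap.adjoint (ℓ i))‖ ≤
      (1 + Real.sqrt d) ^ 2 := by
  have hone : ‖(1 : H →L[ℂ] H)‖ ≤ 1 := by
    simpa [ContinuousLinearMap.one_def] using ContinuousLinearMap.norm_id_le (E := H)
  have hstar : ∀ i j, star (ℓ i) * (ℓ j) = if i = j then (1 : H →L[ℂ] H) else 0 := by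
    intro i j
    simpa [ContinuousLinearMap.star_eq_adjoint, ContinuousLinearMap.mul_def] using hℓ i j
  set A : H →L[ℂ] H := ∑ i, ℓ i * ℓ i with hA
  have hAA : star A * A = (d : ℕ) • (1 : H →L[ℂ] H) := by
    have h1 : star A * A = ∑ i : Fin d, ∑ j : Fin d,
        star (ℓ i) * ((star (ℓ i) * ℓ j) * ℓ j) := by
      rw [hA, star_sum, Finset.sum_mul_sum]
      refine Finset.sum_congr rfl fun i _ => Finset.sum_congr rfl fun j _ => ?_
      simp [star_mul, mul_assoc]
    rw [h1]
    have h2 : ∀ i j : Fin d, star (ℓ i) * ((star (ℓ i) * ℓ j) * ℓ j) =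
        if i = j then (1 : H →L[ℂ] H) else 0 := by
      intro i j
      rw [hstar]
      by_cases h : i = j
      · simp [h, hstar]
      · simp [h]
    simp only [h2]
    simp [Finset.sum_ite_eq, Finset.card_univ]
  have hnormA : ‖A‖ ≤ Real.sqrt d := by
    have h1 : ‖A‖ * ‖A‖ ≤ (d : ℝ) := by
      rw [← CStarRing.norm_star_mul_self, hAA]
      calc ‖(d : ℕ) • (1 : H →L[ℂ] H)‖ ≤ (d : ℝ) * ‖(1 : H →L[ℂ] H)‖ :=
            norm_nsmul_le
        _ ≤ (d : ℝ) * 1 := by gcongr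
        _ = d := mul_one _
    have h2 : (0:ℝ) ≤ ‖A‖ := norm_nonneg _
    nlinarith [Real.sq_sqrt (Nat.cast_nonneg (α := ℝ) d), Real.sqrt_nonneg (d : ℝ),
      sq_nonneg (‖A‖ - Real.sqrt d)]
  have hQ : ‖(1 : H →L[ℂ] H) - P‖ ≤ 1 := by
    set Q : H →L[ℂ] H := 1 - P with hQdef
    have hQsa : IsSelfAdjoint Q := (IsSelfAdjoint.one (H →L[ℂ] H)).sub hPsa
    have hQQ : Q * Q = Q := by
      have hP : P * P = P := hPproj
      simp only [hQdef, sub_mul, mul_sub, one_mul, mul_one, hP]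
      abel
    have h1 : ‖Q‖ * ‖Q‖ = ‖Q‖ := by
      rw [← CStarRing.norm_star_mul_self, hQsa.star_eq, hQQ]
    nlinarith [norm_nonneg Q]
  -- decompose
  have hsplit : ((d : ℂ) + 1) • (1 : H →L[ℂ] H) - P +
        ∑ i, (ℓ i ∘L ℓ i +
          ContinuousLinearMap.adjoint (ℓ i) ∘L ContinuousLinearMap.adjoint (ℓ i)) =
      (d : ℂ) • (1 : H →L[ℂ] H) + ((1 : H →L[ℂ] H) - P) + (A + star A) := by
    have hsum : ∑ i, (ℓ i ∘L ℓ i +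
          ContinuousLinearMap.adjoint (ℓ i) ∘L ContinuousLinearMap.adjoint (ℓ i)) =
        A + star A := by
      rw [hA, star_sum, ← Finset.sum_add_distrib]
      refine Finset.sum_congr rfl fun i _ => ?_
      simp [star_mul, ContinuousLinearMap.star_eq_adjoint, ContinuousLinearMap.mul_def]
    rw [hsum, add_smul, one_smul]
    abel
  rw [hsplit]
  have hd1 : ‖(d : ℂ) • (1 : H →L[ℂ] H)‖ ≤ (d : ℝ) := by
    rw [norm_smul]
    calc ‖(d : ℂ)‖ * ‖(1 : H →L[ℂ] H)‖ ≤ ‖(d : ℂ)‖ * 1 := by gcongr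
      _ = (d : ℝ) := by simp
  have hAs : ‖star A‖ ≤ Real.sqrt d := by rwa [norm_star]
  calc ‖(d : ℂ) • (1 : H →L[ℂ] H) + ((1 : H →L[ℂ] H) - P) + (A + star A)‖
      ≤ ‖(d : ℂ) • (1 : H →L[ℂ] H)‖ + ‖(1 : H →L[ℂ] H) - P‖ + (‖A‖ + ‖star A‖) := by
        refine (norm_add_le _ _).trans ?_
        exact add_le_add (norm_add_le _ _) (norm_add_le _ _)
    _ ≤ (d : ℝ) + 1 + (Real.sqrt d + Real.sqrt d) := by gcongr
    _ ≤ (1 + Real.sqrt d) ^ 2 := by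
        have := Real.sq_sqrt (Nat.cast_nonneg (α := ℝ) d)
        nlinarith [Real.sqrt_nonneg (d : ℝ)]
end
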